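/- Among all Euclidean triangles of unit area, the equilateral triangle maximizes the length of the shortest height. -/

import Mathlib

open MeasureTheory Pointwise

noncomputable abbrev EE2 := EuclideanSpace ℝ (Fin 2)

lemma tri_prod_vol :
    volume {p : ℝ × ℝ | 0 ≤ p.1 ∧ 0 ≤ p.2 ∧ p.1 + p.2 ≤ 1} = ENNReal.ofReal (1/2) := by
  have hmeas : MeasurableSet {p : ℝ × ℝ | 0 ≤ p.1 ∧ 0 ≤ p.2 ∧ p.1 + p.2 ≤ 1} := by
    apply MeasurableSet.inter
    · exact measurableSet_le measurable_const measurable_fst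
    apply MeasurableSet.inter
    · exact measurableSet_le measurable_const measurable_snd
    · exact measurableSet_le (measurable_fst.add measurable_snd) measurable_const
  have : (volume : Measure (ℝ × ℝ)) = (volume : Measure ℝ).prod volume := rfl
  rw [this, Measure.prod_apply hmeas]
  have hslice : (fun x : ℝ => volume (Prod.mk x ⁻¹' {p : ℝ × ℝ | 0 ≤ p.1 ∧ 0 ≤ p.2 ∧ p.1 + p.2 ≤ 1}))
      = Set.indicator (Set.Icc (0:ℝ) 1) (fun x => ENNReal.ofReal (1 - x)) := by
    funext x
    by_cases hx : 0 ≤ x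
    · have : Prod.mk x ⁻¹' {p : ℝ × ℝ | 0 ≤ p.1 ∧ 0 ≤ p.2 ∧ p.1 + p.2 ≤ 1}
          = Set.Icc 0 (1 - x) := by
        ext y; simp only [Set.mem_preimage, Set.mem_setOf_eq, Set.mem_Icc]
        constructor
        · rintro ⟨_, h2, h3⟩; exact ⟨h2, by linarith⟩
        · rintro ⟨h2, h3⟩; exact ⟨hx, h2, by linarith⟩
      rw [this, Real.volume_Icc]
      by_cases hx1 : x ≤ 1
      · rw [Set.indicator_of_mem (Set.mem_Icc.mpr ⟨hx, hx1⟩)]; norm_num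
      · rw [Set.indicator_of_notMem (fun hmem => hx1 hmem.2)]
        rw [ENNReal.ofReal_eq_zero]; linarith
    · have : Prod.mk x ⁻¹' {p : ℝ × ℝ | 0 ≤ p.1 ∧ 0 ≤ p.2 ∧ p.1 + p.2 ≤ 1} = ∅ := by
        ext y; simp only [Set.mem_preimage, Set.mem_setOf_eq, Set.mem_empty_iff_false]
        tauto
      rw [this, Set.indicator_of_notMem (by simp; intro h; linarith)]
      simp
  rw [hslice]
  have : lintegral volume ((Set.Icc (0:ℝ) 1).indicator fun x => ENNReal.ofReal (1 - x))
      = ∫⁻ x in Set.Icc (0:ℝ) 1, ENNReal.ofReal (1 - x) :=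
    lintegral_indicator measurableSet_Icc _
  rw [this]
  rw [← ofReal_integral_eq_lintegral_ofReal]
  · rw [show ∫ x in Set.Icc (0:ℝ) 1, (1 - x) = 1/2 by
      rw [MeasureTheory.integral_Icc_eq_integral_Ioc, ← intervalIntegral.integral_of_le zero_le_one]
      simp [intervalIntegral.integral_sub intervalIntegrable_const intervalIntegral.intervalIntegrable_id]
      norm_num]
  · exact (continuous_const.sub continuous_id).integrableOn_Icc
  · filter_upwards [ae_restrict_mem measurableSet_Icc] with x hx
    rw [Set.mem_Icc] at hx
    simp only [Pi.zero_apply]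
    linarith [hx.2]


lemma tri_E_vol :
    volume {x : EE2 | 0 ≤ x 0 ∧ 0 ≤ x 1 ∧ x 0 + x 1 ≤ 1} = ENNReal.ofReal (1/2) := by
  have h2 : MeasurableSet {p : ℝ × ℝ | 0 ≤ p.1 ∧ 0 ≤ p.2 ∧ p.1 + p.2 ≤ 1} := by
    apply MeasurableSet.inter
    · exact measurableSet_le measurable_const measurable_fst
    apply MeasurableSet.inter
    · exact measurableSet_le measurable_const measurable_snd
    · exact measurableSet_le (measurable_fst.add measurable_snd) measurable_const
  have m0 : Measurable fun x : EE2 => x 0 :=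
    (measurable_pi_apply 0).comp (MeasurableEquiv.toLp 2 (Fin 2 → ℝ)).symm.measurable
  have m1 : Measurable fun x : EE2 => x 1 :=
    (measurable_pi_apply 1).comp (MeasurableEquiv.toLp 2 (Fin 2 → ℝ)).symm.measurable
  have hSE : MeasurableSet {x : EE2 | 0 ≤ x 0 ∧ 0 ≤ x 1 ∧ x 0 + x 1 ≤ 1} := by
    apply MeasurableSet.inter
    · exact measurableSet_le measurable_const m0
    apply MeasurableSet.inter
    · exact measurableSet_le measurable_const m1
    · exact measurableSet_le (m0.add m1) measurable_const
  have key := (((EuclideanSpace.volume_preserving_symm_measurableEquiv_toLp (Fin 2)).symm _).comp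
      ((volume_preserving_finTwoArrow ℝ).symm _)).measure_preimage
      (μb := volume) (s := {x : EE2 | 0 ≤ x 0 ∧ 0 ≤ x 1 ∧ x 0 + x 1 ≤ 1}) hSE.nullMeasurableSet
  have : (⇑(MeasurableEquiv.toLp 2 (Fin 2 → ℝ)).symm.symm ∘ ⇑(MeasurableEquiv.finTwoArrow (α := ℝ)).symm) ⁻¹'
      {x : EE2 | 0 ≤ x 0 ∧ 0 ≤ x 1 ∧ x 0 + x 1 ≤ 1} = {p : ℝ × ℝ | 0 ≤ p.1 ∧ 0 ≤ p.2 ∧ p.1 + p.2 ≤ 1} := by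
    rfl
  rw [this] at key
  rw [← key, tri_prod_vol]


lemma tri_hull :
    convexHull ℝ ({0, EuclideanSpace.single 0 1, EuclideanSpace.single 1 1} : Set EE2)
      = {x : EE2 | 0 ≤ x 0 ∧ 0 ≤ x 1 ∧ x 0 + x 1 ≤ 1} := by
  apply le_antisymm
  · apply convexHull_min
    · rintro x (rfl | rfl | rfl) <;>
        simp [EuclideanSpace.single_apply]
    · intro x hx y hy a b ha hb hab
      obtain ⟨hx0, hx1, hxs⟩ := hx
      obtain ⟨hy0, hy1, hys⟩ := hy
      have e0 : (a • x + b • y) 0 = a * x 0 + b * y 0 := rfl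
      have e1 : (a • x + b • y) 1 = a * x 1 + b * y 1 := rfl
      refine ⟨by rw [e0]; positivity, by rw [e1]; positivity, ?_⟩
      rw [e0, e1]; nlinarith
  · intro x hx
    obtain ⟨h0, h1, hs⟩ := hx
    have hmem : ∀ i : Fin 3,
        (![0, EuclideanSpace.single 0 1, EuclideanSpace.single 1 1] i : EE2)
          ∈ convexHull ℝ ({0, EuclideanSpace.single 0 1, EuclideanSpace.single 1 1} : Set EE2) := by
      intro i; apply subset_convexHull; fin_cases i <;> simp
    have key := (convex_convexHull ℝ ({0, EuclideanSpace.single 0 1, EuclideanSpace.single 1 1} : Set EE2)).sum_mem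
      (t := (Finset.univ : Finset (Fin 3)))
      (w := ![1 - x 0 - x 1, x 0, x 1])
      (z := ![0, EuclideanSpace.single 0 1, EuclideanSpace.single 1 1])
      (by intro i _; fin_cases i <;> simp <;> linarith)
      (by simp [Fin.sum_univ_three]; ring)
      (fun i _ => hmem i)
    rw [Fin.sum_univ_three] at key
    have hrw : x = (1 - x 0 - x 1) • (0:EE2) + x 0 • EuclideanSpace.single 0 1
        + x 1 • EuclideanSpace.single 1 1 := by
      ext i
      fin_cases i <;> simp [EuclideanSpace.single_apply]
    rw [hrw]
    simpa using key


lemma tri_vol (A B C : EE2) :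
    volume (convexHull ℝ ({A, B, C} : Set EE2))
      = ENNReal.ofReal (|(B 0 - A 0) * (C 1 - A 1) - (C 0 - A 0) * (B 1 - A 1)| / 2) := by
  set u : EE2 := B - A with hu
  set v : EE2 := C - A with hv
  set b : Module.Basis (Fin 2) ℝ EE2 := (EuclideanSpace.basisFun (Fin 2) ℝ).toBasis with hb
  set L : EE2 →ₗ[ℝ] EE2 := b.constr ℝ ![u, v] with hL
  have hb0 : b 0 = EuclideanSpace.single 0 1 := by
    rw [hb, OrthonormalBasis.coe_toBasis, EuclideanSpace.basisFun_apply]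
  have hb1 : b 1 = EuclideanSpace.single 1 1 := by
    rw [hb, OrthonormalBasis.coe_toBasis, EuclideanSpace.basisFun_apply]
  have hLu : L (EuclideanSpace.single 0 1) = u := by
    rw [← hb0, hL, Module.Basis.constr_basis]; rfl
  have hLv : L (EuclideanSpace.single 1 1) = v := by
    rw [← hb1, hL, Module.Basis.constr_basis]; rfl
  have himg : L '' ({0, EuclideanSpace.single 0 1, EuclideanSpace.single 1 1} : Set EE2)
      = {0, u, v} := by
    rw [Set.image_insert_eq, Set.image_insert_eq, Set.image_singleton, map_zero, hLu, hLv]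
  have hset : ({A, B, C} : Set EE2)
      = A +ᵥ (L '' ({0, EuclideanSpace.single 0 1, EuclideanSpace.single 1 1} : Set EE2)) := by
    rw [himg]
    have : A +ᵥ ({0, u, v} : Set EE2) = {A + 0, A + u, A + v} := by
      rw [Set.vadd_set_insert, Set.vadd_set_insert, Set.vadd_set_singleton]; rfl
    rw [this]
    have eB : A + u = B := by rw [hu]; abel
    have eC : A + v = C := by rw [hv]; abel
    rw [add_zero, eB, eC]
  have hdet : LinearMap.det L = u 0 * v 1 - v 0 * u 1 := by
    rw [← LinearMap.det_toMatrix b L]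
    rw [Matrix.det_fin_two]
    have h00 : LinearMap.toMatrix b b L 0 0 = u 0 := by
      rw [LinearMap.toMatrix_apply, hb0, hLu]; rfl
    have h10 : LinearMap.toMatrix b b L 1 0 = u 1 := by
      rw [LinearMap.toMatrix_apply, hb0, hLu]; rfl
    have h01 : LinearMap.toMatrix b b L 0 1 = v 0 := by
      rw [LinearMap.toMatrix_apply, hb1, hLv]; rfl
    have h11 : LinearMap.toMatrix b b L 1 1 = v 1 := by
      rw [LinearMap.toMatrix_apply, hb1, hLv]; rfl
    rw [h00, h01, h10, h11]
  rw [hset, convexHull_vadd, measure_vadd, ← L.image_convexHull,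
    Measure.addHaar_image_linearMap, tri_hull, tri_E_vol, hdet]
  rw [← ENNReal.ofReal_mul (abs_nonneg _)]
  congr 1
  have husub : u = B - A := hu
  have hvsub : v = C - A := hv
  have hu0 : u 0 = B 0 - A 0 := by rw [husub]; rfl
  have hu1 : u 1 = B 1 - A 1 := by rw [husub]; rfl
  have hv0 : v 0 = C 0 - A 0 := by rw [hvsub]; rfl
  have hv1 : v 1 = C 1 - A 1 := by rw [hvsub]; rfl
  rw [hu0, hu1, hv0, hv1]
  ring

lemma heron_bound {x y z M : ℝ} (hx : 0 ≤ x) (hy : 0 ≤ y) (hz : 0 ≤ z)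
    (hxM : x ≤ M) (hyM : y ≤ M) (hzM : z ≤ M)
    (h : 2*x*y + 2*y*z + 2*z*x - x^2 - y^2 - z^2 = 16) : 16 ≤ 3 * M ^ 2 := by
  nlinarith [sq_nonneg (x - y), sq_nonneg (y - z), sq_nonneg (x - z),
    sq_nonneg (M - x), sq_nonneg (M - y), sq_nonneg (M - z),
    mul_nonneg (sub_nonneg.2 hxM) hx, mul_nonneg (sub_nonneg.2 hyM) hy,
    mul_nonneg (sub_nonneg.2 hzM) hz]

lemma heron_eq {x y z M : ℝ} (hx : 0 ≤ x) (hy : 0 ≤ y) (hz : 0 ≤ z)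
    (hxM : x ≤ M) (hyM : y ≤ M) (hzM : z ≤ M)
    (h : 2*x*y + 2*y*z + 2*z*x - x^2 - y^2 - z^2 = 16) (hM : 3 * M ^ 2 = 16) :
    x = M ∧ y = M ∧ z = M := by
  refine ⟨le_antisymm hxM ?_, le_antisymm hyM ?_, le_antisymm hzM ?_⟩ <;>
    nlinarith [sq_nonneg (x - y), sq_nonneg (y - z), sq_nonneg (x - z),
      sq_nonneg (M - x), sq_nonneg (M - y), sq_nonneg (M - z),
      mul_nonneg (sub_nonneg.2 hxM) hx, mul_nonneg (sub_nonneg.2 hyM) hy,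
      mul_nonneg (sub_nonneg.2 hzM) hz]

lemma alg_main {m K : ℝ} (hm : 0 < m) (hK : 0 < K) (hK4 : K ^ 4 = 3)
    (h : 16 / 3 ≤ m ^ 4) : 2 / m ≤ K := by
  rw [div_le_iff₀ hm]
  have hpow : (2:ℝ) ^ 4 ≤ (K * m) ^ 4 := by nlinarith
  exact le_of_pow_le_pow_left₀ (by norm_num) (by positivity) hpow

lemma alg_eq_forward {m K : ℝ} (hm : 0 < m) (hK : 0 < K) (hK4 : K ^ 4 = 3)
    (h : 2 / m = K) : m ^ 4 = 16 / 3 := by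
  have hmK : K * m = 2 := by field_simp at h; linarith
  have h1 : (K * m) ^ 4 = 16 := by rw [hmK]; norm_num
  nlinarith

lemma alg_eq_backward {m K : ℝ} (hm : 0 < m) (hK : 0 < K) (hK4 : K ^ 4 = 3)
    (h : m ^ 4 = 16 / 3) : 2 / m = K := by
  have h2m : (2 / m) ^ 4 = K ^ 4 := by
    rw [div_pow, h, hK4]; norm_num
  have hp : 0 < 2 / m := by positivity
  have l1 := le_of_pow_le_pow_left₀ (n := 4) (by norm_num) hK.le (le_of_eq h2m)
  have l2 := le_of_pow_le_pow_left₀ (n := 4) (by norm_num) hp.le (le_of_eq h2m.symm)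
  linarith

lemma sq_eq_of_pos {p q : ℝ} (hp : 0 < p) (hq : 0 < q) (h : p ^ 2 = q ^ 2) : p = q := by
  nlinarith

lemma min_two_div {p q : ℝ} (hp : 0 < p) (hq : 0 < q) :
    min (2 / p) (2 / q) = 2 / max p q := by
  rcases le_total p q with h | h
  · rw [max_eq_right h, min_eq_right (div_le_div_of_nonneg_left (by norm_num) hp h)]
  · rw [max_eq_left h, min_eq_left (div_le_div_of_nonneg_left (by norm_num) hq h)]

lemma third_le {t : ℝ} (h : 16 ≤ 3 * t) : 16 / 3 ≤ t := by linarith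

/-- Among Euclidean triangles of unit area, the equilateral triangle maximizes the
shortest height: every unit-area triangle has shortest height at most `3^(1/4)`, with
equality if and only if the triangle is equilateral. (For a unit-area triangle the height
on the side of length `s` is `2/s`.) -/
theorem stmt_12 (A B C : EuclideanSpace ℝ (Fin 2))
    (hind : AffineIndependent ℝ ![A, B, C])
    (harea : (volume (convexHull ℝ ({A, B, C} : Set (EuclideanSpace ℝ (Fin 2))))).toReal = 1) :
    min (2 / dist B C) (min (2 / dist A C) (2 / dist A B)) ≤ (3 : ℝ) ^ ((1 : ℝ) / 4) ∧
    (min (2 / dist B C) (min (2 / dist A C) (2 / dist A B)) = (3 : ℝ) ^ ((1 : ℝ) / 4) ↔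
      dist A B = dist B C ∧ dist B C = dist A C) := by
  set K : ℝ := (3 : ℝ) ^ ((1 : ℝ) / 4) with hK
  have hKpos : 0 < K := Real.rpow_pos_of_pos (by norm_num) _
  have hK4 : K ^ 4 = 3 := by
    rw [hK, ← Real.rpow_natCast ((3:ℝ) ^ ((1:ℝ)/4)) 4, ← Real.rpow_mul (by norm_num)]
    norm_num
  have hinj := hind.injective
  have hAB : A ≠ B := by
    intro h
    have : (0 : Fin 3) = 1 := hinj (by simpa using h)
    exact absurd this (by decide)
  have hAC : A ≠ C := by
    intro h
    have : (0 : Fin 3) = 2 := hinj (by simpa using h)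
    exact absurd this (by decide)
  have hBC : B ≠ C := by
    intro h
    have : (1 : Fin 3) = 2 := hinj (by simpa using h)
    exact absurd this (by decide)
  set a : ℝ := dist B C with ha
  set b : ℝ := dist A C with hb
  set c : ℝ := dist A B with hc
  have hapos : 0 < a := dist_pos.2 hBC
  have hbpos : 0 < b := dist_pos.2 hAC
  have hcpos : 0 < c := dist_pos.2 hAB
  have sqdist : ∀ X Y : EuclideanSpace ℝ (Fin 2),
      (dist X Y) ^ 2 = (X 0 - Y 0) ^ 2 + (X 1 - Y 1) ^ 2 := by
    intro X Y
    rw [EuclideanSpace.dist_eq, Real.sq_sqrt (by positivity), Fin.sum_univ_two,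
      Real.dist_eq, Real.dist_eq, sq_abs, sq_abs]
  have ha2 : a ^ 2 = (B 0 - C 0) ^ 2 + (B 1 - C 1) ^ 2 := sqdist B C
  have hb2 : b ^ 2 = (A 0 - C 0) ^ 2 + (A 1 - C 1) ^ 2 := sqdist A C
  have hc2 : c ^ 2 = (A 0 - B 0) ^ 2 + (A 1 - B 1) ^ 2 := sqdist A B
  set D : ℝ := (B 0 - A 0) * (C 1 - A 1) - (C 0 - A 0) * (B 1 - A 1) with hD
  have habs : |D| / 2 = 1 := by
    rw [tri_vol A B C, ENNReal.toReal_ofReal (by positivity)] at harea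
    exact harea
  have habs2 : |D| = 2 := by linear_combination 2 * habs
  have hD2 : D ^ 2 = 4 := by rw [← sq_abs, habs2]; norm_num
  have heron : 2 * (a^2) * (b^2) + 2 * (b^2) * (c^2) + 2 * (c^2) * (a^2)
      - (a^2)^2 - (b^2)^2 - (c^2)^2 = 16 := by
    rw [hD] at hD2
    rw [ha2, hb2, hc2]
    linear_combination 4 * hD2
  set m : ℝ := max a (max b c) with hm
  have hmpos : 0 < m := lt_of_lt_of_le hapos (le_max_left _ _)
  set M : ℝ := m ^ 2 with hM
  have hxa : a ^ 2 ≤ M := pow_le_pow_left₀ hapos.le (le_max_left _ _) 2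
  have hxb : b ^ 2 ≤ M :=
    pow_le_pow_left₀ hbpos.le ((le_max_left b c).trans (le_max_right a _)) 2
  have hxc : c ^ 2 ≤ M :=
    pow_le_pow_left₀ hcpos.le ((le_max_right b c).trans (le_max_right a _)) 2
  have hMm : M ^ 2 = m ^ 4 := by rw [hM]; ring
  have hminval : min (2 / a) (min (2 / b) (2 / c)) = 2 / m := by
    have hbc' : (0:ℝ) < max b c := lt_of_lt_of_le hbpos (le_max_left _ _)
    rw [min_two_div hbpos hcpos, min_two_div hapos hbc']
  have h16 : 16 ≤ 3 * M ^ 2 :=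
    heron_bound (by positivity) (by positivity) (by positivity) hxa hxb hxc heron
  have hm4 : 16 / 3 ≤ m ^ 4 := hMm ▸ third_le h16
  have hmain : 2 / m ≤ K := alg_main hmpos hKpos hK4 hm4
  refine ⟨by rw [hminval]; exact hmain, ?_⟩
  rw [hminval]
  constructor
  · intro heq
    have hmf : m ^ 4 = 16 / 3 := alg_eq_forward hmpos hKpos hK4 heq
    have hMeq : 3 * M ^ 2 = 16 := by rw [hMm, hmf]; norm_num
    obtain ⟨hqa, hqb, hqc⟩ :=
      heron_eq (by positivity) (by positivity) (by positivity) hxa hxb hxc heron hMeq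
    exact ⟨sq_eq_of_pos hcpos hapos (by rw [hqc, hqa]),
      sq_eq_of_pos hapos hbpos (by rw [hqa, hqb])⟩
  · rintro ⟨h1, h2⟩
    -- h1 : c = a, h2 : a = b
    have hma : m = a := by rw [hm, ← h2, h1, max_self, max_self]
    rw [← h2, h1] at heron
    have hm4' : m ^ 4 = 16 / 3 := by
      rw [hma]
      linear_combination heron / 3
    exact alg_eq_backward hmpos hKpos hK4 hm4'
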